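/- Let f : X → ℝ be continuously differentiable on a box X = ∏ᵢ [0, bᵢ] ⊆ ℝⁿ, and suppose f is DR-submodular, i.e., x ≤ y componentwise implies ∇f(x) ≥ ∇f(y) componentwise. Then for any x ∈ X and any direction v ≥ 0 (componentwise), the function g(z) = f(x + z v) is concave on the interval where x + z v ∈ X. -/

import Mathlib

open InnerProductSpace

/-- Concavity of a continuously differentiable DR-submodular function along
nonnegative directions, within the box `X = ∏ i, [0, b i]`. -/
theorem drSubmodular_concave_along_nonneg_direction
    {n : ℕ} (b : EuclideanSpace ℝ (Fin n)) (hb : ∀ i, 0 ≤ b i)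
    (X : Set (EuclideanSpace ℝ (Fin n)))
    (hX : X = {y : EuclideanSpace ℝ (Fin n) | ∀ i, y i ∈ Set.Icc 0 (b i)})
    (f : EuclideanSpace ℝ (Fin n) → ℝ)
    (hf : ContDiff ℝ 1 f)
    (hDR : ∀ x ∈ X, ∀ y ∈ X, (∀ i, x i ≤ y i) →
      ∀ i, gradient f y i ≤ gradient f x i)
    (x : EuclideanSpace ℝ (Fin n)) (hx : x ∈ X)
    (v : EuclideanSpace ℝ (Fin n)) (hv : ∀ i, 0 ≤ v i) :
    ConcaveOn ℝ {z : ℝ | x + z • v ∈ X} (fun z : ℝ => f (x + z • v)) := by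
  set S : Set ℝ := {z : ℝ | x + z • v ∈ X} with hS
  -- convexity of S
  have hXconv : Convex ℝ X := by
    subst hX
    intro y hy z hz a c ha hc hac
    intro i
    have : (a • y + c • z) i = a * y i + c * z i := by
      simp [smul_eq_mul]
    rw [Set.mem_setOf_eq] at hy hz
    rw [this]
    exact (convex_Icc (0:ℝ) (b i)) (hy i) (hz i) ha hc hac
  have hSconv : Convex ℝ S := by
    intro z₁ hz₁ z₂ hz₂ a c ha hc hac
    have : x + (a * z₁ + c * z₂) • v = a • (x + z₁ • v) + c • (x + z₂ • v) := by
      have h1 : a • x + c • x = x := by rw [← add_smul, hac, one_smul]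
      rw [smul_add, smul_add, smul_smul, smul_smul,
        add_add_add_comm, h1, add_smul]
    show x + (a • z₁ + c • z₂) • v ∈ X
    simp only [smul_eq_mul]
    rw [this]
    exact hXconv hz₁ hz₂ ha hc hac
  -- derivative of g
  have hL : ∀ z : ℝ, HasDerivAt (fun z : ℝ => x + z • v) v z := by
    intro z
    have h1 : HasDerivAt (fun z : ℝ => z • v) ((1:ℝ) • v) z :=
      (hasDerivAt_id z).smul_const v
    simpa using h1.const_add x
  have hdf := hf.differentiable one_ne_zero
  have hg : ∀ z : ℝ, HasDerivAt (fun z : ℝ => f (x + z • v))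
      (inner ℝ (gradient f (x + z • v)) v : ℝ) z := by
    intro z
    have hfd : HasFDerivAt f
        (InnerProductSpace.toDual ℝ _ (gradient f (x + z • v))) (x + z • v) :=
      (hdf (x + z • v)).hasGradientAt.hasFDerivAt
    have := hfd.comp_hasDerivAt z (hL z)
    simp [InnerProductSpace.toDual_apply_apply] at this ⊢
    exact this
  -- componentwise order
  have hcomp : ∀ z₁ z₂ : ℝ, z₁ ≤ z₂ → ∀ i, (x + z₁ • v) i ≤ (x + z₂ • v) i := by
    intro z₁ z₂ h12 i
    have : x i + z₁ * v i ≤ x i + z₂ * v i :=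
      add_le_add_right (mul_le_mul_of_nonneg_right h12 (hv i)) _
    simpa [smul_eq_mul] using this
  apply AntitoneOn.concaveOn_of_deriv hSconv
  · exact (hf.continuous.comp
      (continuous_const.add (continuous_id.smul continuous_const))).continuousOn
  · exact fun z _ => (hg z).differentiableAt.differentiableWithinAt
  · intro z₁ hz₁ z₂ hz₂ h12
    have hz₁' : z₁ ∈ S := interior_subset hz₁
    have hz₂' : z₂ ∈ S := interior_subset hz₂
    rw [(hg z₁).deriv, (hg z₂).deriv]
    rw [PiLp.inner_apply, PiLp.inner_apply]
    apply Finset.sum_le_sum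
    intro i _
    have hgrad := hDR (x + z₁ • v) hz₁' (x + z₂ • v) hz₂' (hcomp z₁ z₂ h12) i
    simpa [RCLike.inner_apply, conj_trivial] using
      mul_le_mul_of_nonneg_left hgrad (hv i)
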